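/- arXiv:1308.5466 — 5 statements merged into one kernel-verified Lean document; each statement's English description precedes it below -/
import Mathlib

section
/- For any finite simple graph G and any permutation π of V(G), the domination number of πG satisfies γ(G) ≤ γ(πG) ≤ 2γ(G). -/
open SimpleGraph

variable {V : Type*}

/-- `A` dominates `B`: every vertex of `B` is in the closed neighborhood of some vertex of `A`. -/
def Dominates (G : SimpleGraph V) (A B : Set V) : Prop :=
  ∀ b ∈ B, ∃ a ∈ A, a = b ∨ G.Adj a b

/-- `D` is a dominating set of `G`. -/
def IsDomSet (G : SimpleGraph V) (D : Set V) : Prop :=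
  Dominates G D Set.univ

/-- The domination number of `G`. -/
noncomputable def domNum (G : SimpleGraph V) : ℕ :=
  sInf {n | ∃ D : Set V, IsDomSet G D ∧ D.ncard = n}

/-- The prism of `G` with respect to a permutation `π`: two disjoint copies of `G`
joined by the perfect matching `u – π u`. -/
def prism (G : SimpleGraph V) (π : Equiv.Perm V) : SimpleGraph (V ⊕ V) :=
  SimpleGraph.fromRel (fun a b =>
    match a, b with
    | Sum.inl u, Sum.inl v => G.Adj u v
    | Sum.inr u, Sum.inr v => G.Adj u v
    | Sum.inl u, Sum.inr v => v = π u
    | Sum.inr _, Sum.inl _ => False)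

/-- `G` is a universal fixer. -/
def IsUniversalFixer (G : SimpleGraph V) : Prop :=
  ∀ π : Equiv.Perm V, domNum (prism G π) = domNum G

/-- `D` is a γ-set (minimum dominating set) of `G`. -/
def IsGammaSet (G : SimpleGraph V) (D : Set V) : Prop :=
  IsDomSet G D ∧ D.ncard = domNum G

/-- `D = [D₁, D₂]` is a symmetric γ-set of `G`. -/
def IsSymGammaSet (G : SimpleGraph V) (D D1 D2 : Set V) : Prop :=
  IsGammaSet G D ∧ D = D1 ∪ D2 ∧ Disjoint D1 D2 ∧ D1.Nonempty ∧ D2.Nonempty ∧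
    Dominates G D1 (Set.univ \ D2) ∧ Dominates G D2 (Set.univ \ D1)

/-- `S` is a 2-packing: closed neighborhoods of distinct vertices of `S` are disjoint. -/
def IsTwoPacking (G : SimpleGraph V) (S : Set V) : Prop :=
  ∀ x ∈ S, ∀ y ∈ S, x ≠ y →
    Disjoint (insert x (G.neighborSet x)) (insert y (G.neighborSet y))

/-- `D` is an even symmetric γ-set of `G`. -/
def IsEvenSymGammaSet (G : SimpleGraph V) (D : Set V) : Prop :=
  ∃ D1 D2, IsSymGammaSet G D D1 D2 ∧ D1.ncard = D2.ncard

theorem stmt_0 [Fintype V] (G : SimpleGraph V) (π : Equiv.Perm V) :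
    domNum G ≤ domNum (prism G π) ∧ domNum (prism G π) ≤ 2 * domNum G := by
  classical
  have hle : ∀ (W : Type _) (H : SimpleGraph W) (D : Set W), IsDomSet H D →
      domNum H ≤ D.ncard := by
    intro W H D hD
    exact Nat.sInf_le ⟨D, hD, rfl⟩
  -- G has a minimum dominating set
  have hGs : IsDomSet G (Set.univ : Set V) := fun b _ => ⟨b, trivial, Or.inl rfl⟩
  have hGne : {n | ∃ D : Set V, IsDomSet G D ∧ D.ncard = n}.Nonempty :=
    ⟨_, Set.univ, hGs, rfl⟩
  obtain ⟨D, hD, hDcard⟩ := Nat.sInf_mem hGne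
  -- prism has a minimum dominating set
  have hPs : IsDomSet (prism G π) (Set.univ : Set (V ⊕ V)) :=
    fun b _ => ⟨b, trivial, Or.inl rfl⟩
  have hPne : {n | ∃ D : Set (V ⊕ V), IsDomSet (prism G π) D ∧ D.ncard = n}.Nonempty :=
    ⟨_, Set.univ, hPs, rfl⟩
  obtain ⟨E, hE, hEcard⟩ := Nat.sInf_mem hPne
  constructor
  · -- lower bound: project E to V
    set f : V ⊕ V → V := Sum.elim id (fun u => π.symm u) with hf
    have hdom : IsDomSet G (f '' E) := by
      intro v _
      obtain ⟨a, haE, hav⟩ := hE (Sum.inl v) trivial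
      refine ⟨f a, ⟨a, haE, rfl⟩, ?_⟩
      rcases hav with h | h
      · subst h; exact Or.inl rfl
      · rcases a with u | u
        · rcases h.2 with h' | h'
          · exact Or.inr h'
          · exact Or.inr h'.symm
        · rcases h.2 with h' | h'
          · exact absurd h' id
          · simp only [hf, Sum.elim_inr]
            left
            rw [h']
            exact π.symm_apply_apply v
    calc domNum G ≤ (f '' E).ncard := hle _ _ _ hdom
      _ ≤ E.ncard := Set.ncard_image_le (Set.toFinite E)
      _ = domNum (prism G π) := hEcard
  · -- upper bound: two copies of D
    have hdom : IsDomSet (prism G π) (Sum.inl '' D ∪ Sum.inr '' D) := by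
      intro b _
      rcases b with v | v
      · obtain ⟨a, haD, hav⟩ := hD v trivial
        refine ⟨Sum.inl a, Or.inl ⟨a, haD, rfl⟩, ?_⟩
        rcases hav with h | h
        · exact Or.inl (by rw [h])
        · exact Or.inr ⟨by simp [G.ne_of_adj h], Or.inl h⟩
      · obtain ⟨a, haD, hav⟩ := hD v trivial
        refine ⟨Sum.inr a, Or.inr ⟨a, haD, rfl⟩, ?_⟩
        rcases hav with h | h
        · exact Or.inl (by rw [h])
        · exact Or.inr ⟨by simp [G.ne_of_adj h], Or.inl h⟩
    calc domNum (prism G π) ≤ (Sum.inl '' D ∪ Sum.inr '' D).ncard := hle _ _ _ hdom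
      _ ≤ (Sum.inl '' D).ncard + (Sum.inr '' D).ncard :=
          Set.ncard_union_le _ _
      _ = D.ncard + D.ncard := by
          rw [Set.ncard_image_of_injective _ Sum.inl_injective,
            Set.ncard_image_of_injective _ Sum.inr_injective]
      _ = 2 * domNum G := by
          have hDcard' : D.ncard = domNum G := hDcard
          rw [hDcard']; ring
end

section
/- If G is a disconnected graph containing at least one edge and G is a universal fixer, then every connected component of G is a universal fixer. -/
open SimpleGraph

variable {V : Type*}

lemma univ_isDomSet (G : SimpleGraph V) : IsDomSet G Set.univ :=
  fun b _ => ⟨b, trivial, Or.inl rfl⟩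

lemma exists_gammaSet (G : SimpleGraph V) :
    ∃ D : Set V, IsDomSet G D ∧ D.ncard = domNum G := by
  have h : Set.univ.ncard ∈ {n | ∃ D : Set V, IsDomSet G D ∧ D.ncard = n} :=
    ⟨Set.univ, univ_isDomSet G, rfl⟩
  exact Nat.sInf_mem ⟨_, h⟩

lemma domNum_le' {G : SimpleGraph V} {D : Set V} (h : IsDomSet G D) :
    domNum G ≤ D.ncard :=
  Nat.sInf_le ⟨D, h, rfl⟩

lemma prism_adj_inl_inl {G : SimpleGraph V} {π : Equiv.Perm V} {u v : V} :
    (prism G π).Adj (Sum.inl u) (Sum.inl v) ↔ G.Adj u v := by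
  rw [prism, fromRel_adj]
  constructor
  · rintro ⟨-, h | h⟩
    · exact h
    · exact h.symm
  · exact fun h => ⟨by simp [h.ne], Or.inl h⟩

lemma prism_adj_inr_inr {G : SimpleGraph V} {π : Equiv.Perm V} {u v : V} :
    (prism G π).Adj (Sum.inr u) (Sum.inr v) ↔ G.Adj u v := by
  rw [prism, fromRel_adj]
  constructor
  · rintro ⟨-, h | h⟩
    · exact h
    · exact h.symm
  · exact fun h => ⟨by simp [h.ne], Or.inl h⟩

lemma prism_adj_inl_inr {G : SimpleGraph V} {π : Equiv.Perm V} {u v : V} :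
    (prism G π).Adj (Sum.inl u) (Sum.inr v) ↔ v = π u := by
  rw [prism, fromRel_adj]
  constructor
  · rintro ⟨-, h | h⟩
    · exact h
    · exact h.elim
  · exact fun h => ⟨by simp, Or.inl h⟩

lemma prism_adj_inr_inl {G : SimpleGraph V} {π : Equiv.Perm V} {u v : V} :
    (prism G π).Adj (Sum.inr u) (Sum.inl v) ↔ u = π v := by
  rw [prism, fromRel_adj]
  constructor
  · rintro ⟨-, h | h⟩
    · exact h.elim
    · exact h
  · exact fun h => ⟨by simp, Or.inr h⟩

/-- Projection lemma: `γ(G) ≤ γ(πG)`. -/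
lemma domNum_le_domNum_prism {W : Type*} [Finite W] (G : SimpleGraph W) (π : Equiv.Perm W) :
    domNum G ≤ domNum (prism G π) := by
  obtain ⟨D, hD, hc⟩ := exists_gammaSet (prism G π)
  have hdom : IsDomSet G ((Sum.elim id π.symm) '' D) := by
    intro b _
    obtain ⟨a, haD, ha⟩ := hD (Sum.inl b) trivial
    cases a with
    | inl u =>
      refine ⟨u, ⟨Sum.inl u, haD, rfl⟩, ?_⟩
      rcases ha with h | h
      · exact Or.inl (Sum.inl.inj h)
      · exact Or.inr (prism_adj_inl_inl.1 h)
    | inr u =>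
      rcases ha with h | h
      · exact absurd h (by simp)
      · have hu : u = π b := prism_adj_inr_inl.1 h
        refine ⟨π.symm u, ⟨Sum.inr u, haD, rfl⟩, Or.inl ?_⟩
        rw [hu, Equiv.symm_apply_apply]
  calc domNum G ≤ ((Sum.elim id π.symm) '' D).ncard := domNum_le' hdom
    _ ≤ D.ncard := Set.ncard_image_le
    _ = domNum (prism G π) := hc

/-- The key lemma: if `G` is a universal fixer and `S` is a union of connected
components of `G`, then the prism of `G.induce S` over any permutation has the same
domination number as `G.induce S`. -/
lemma aux_fixer [Fintype V] (G : SimpleGraph V) (hUF : IsUniversalFixer G)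
    (S : Set V) (hclosed : ∀ {w v : V}, G.Adj w v → (w ∈ S ↔ v ∈ S))
    (π : Equiv.Perm ↥S) :
    domNum (prism (G.induce S) π) = domNum (G.induce S) := by
  classical
  -- extend π to a permutation of V, identity outside S
  set σ : Equiv.Perm V := π.extendDomain (Equiv.refl ↥S) with hσdef
  have hσ_mem : ∀ {v : V} (hv : v ∈ S), σ v = ↑(π ⟨v, hv⟩) := by
    intro v hv
    rw [hσdef, Equiv.Perm.extendDomain_apply_subtype _ _ hv]
    rfl
  have hσ_not : ∀ {v : V}, v ∉ S → σ v = v := fun hv =>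
    Equiv.Perm.extendDomain_apply_not_subtype _ _ hv
  have hσS : ∀ {v : V}, v ∈ S → σ v ∈ S := by
    intro v hv; rw [hσ_mem hv]; exact (π ⟨v, hv⟩).2
  have hσS' : ∀ {v : V}, σ v ∈ S → v ∈ S := by
    intro v h
    by_contra hv
    rw [hσ_not hv] at h
    exact hv h
  set H : SimpleGraph ↥S := G.induce S with hH
  set R : SimpleGraph ↥(Sᶜ : Set V) := G.induce (Sᶜ : Set V) with hR
  -- key inequality 1 : γ(prism H π) + γ(R) ≤ γ(G)
  have key1 : domNum (prism H π) + domNum R ≤ domNum G := by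
    obtain ⟨D, hD, hc⟩ := exists_gammaSet (prism G σ)
    set m : ↥S ⊕ ↥S → V ⊕ V := Sum.map Subtype.val Subtype.val with hm
    set T : Set (V ⊕ V) := {x | Sum.elim (· ∈ S) (· ∈ S) x} with hT
    have hmT : ∀ x, m x ∈ T := by rintro (x | x) <;> exact x.2
    set E1 : Set (↥S ⊕ ↥S) := m ⁻¹' D with hE1
    have hE1dom : IsDomSet (prism H π) E1 := by
      rintro (⟨v, hv⟩ | ⟨v, hv⟩) -
      · obtain ⟨a, haD, ha⟩ := hD (Sum.inl v) trivial
        rcases ha with h | h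
        · have hin : Sum.inl v ∈ D := h ▸ haD
          exact ⟨Sum.inl ⟨v, hv⟩, hin, Or.inl rfl⟩
        · cases a with
          | inl w =>
            have hadj : G.Adj w v := prism_adj_inl_inl.1 h
            have hw : w ∈ S := (hclosed hadj).2 hv
            exact ⟨Sum.inl ⟨w, hw⟩, haD, Or.inr (prism_adj_inl_inl.2 hadj)⟩
          | inr w =>
            have hwv : w = σ v := prism_adj_inr_inl.1 h
            have hw : w ∈ S := hwv ▸ hσS hv
            refine ⟨Sum.inr ⟨w, hw⟩, haD, Or.inr (prism_adj_inr_inl.2 ?_)⟩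
            exact Subtype.ext (show w = _ from hwv.trans (hσ_mem hv))
      · obtain ⟨a, haD, ha⟩ := hD (Sum.inr v) trivial
        rcases ha with h | h
        · have hin : Sum.inr v ∈ D := h ▸ haD
          exact ⟨Sum.inr ⟨v, hv⟩, hin, Or.inl rfl⟩
        · cases a with
          | inl w =>
            have hvw : v = σ w := prism_adj_inl_inr.1 h
            have hw : w ∈ S := hσS' (hvw ▸ hv)
            refine ⟨Sum.inl ⟨w, hw⟩, haD, Or.inr (prism_adj_inl_inr.2 ?_)⟩
            exact Subtype.ext (show v = _ from hvw.trans (hσ_mem hw))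
          | inr w =>
            have hadj : G.Adj w v := prism_adj_inr_inr.1 h
            have hw : w ∈ S := (hclosed hadj).2 hv
            exact ⟨Sum.inr ⟨w, hw⟩, haD, Or.inr (prism_adj_inr_inr.2 hadj)⟩
    have hE1card : E1.ncard ≤ (D ∩ T).ncard := by
      have hminj : Function.Injective m :=
        Sum.map_injective.2 ⟨Subtype.val_injective, Subtype.val_injective⟩
      have hsub : m '' E1 ⊆ D ∩ T := by
        rintro _ ⟨x, hx, rfl⟩
        exact ⟨hx, hmT x⟩
      calc E1.ncard = (m '' E1).ncard := (Set.ncard_image_of_injective _ hminj).symm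
        _ ≤ (D ∩ T).ncard := Set.ncard_le_ncard hsub (Set.toFinite _)
    set E2 : Set ↥(Sᶜ : Set V) :=
      {v | Sum.inl (v : V) ∈ D ∨ Sum.inr (v : V) ∈ D} with hE2
    have hE2dom : IsDomSet R E2 := by
      rintro ⟨v, hv⟩ -
      have hv' : v ∉ S := hv
      obtain ⟨a, haD, ha⟩ := hD (Sum.inl v) trivial
      rcases ha with h | h
      · have hin : Sum.inl v ∈ D := h ▸ haD
        exact ⟨⟨v, hv⟩, Or.inl hin, Or.inl rfl⟩
      · cases a with
        | inl w =>
          have hadj : G.Adj w v := prism_adj_inl_inl.1 h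
          have hw : (w : V) ∈ (Sᶜ : Set V) := fun hw => hv' ((hclosed hadj).1 hw)
          exact ⟨⟨w, hw⟩, Or.inl haD, Or.inr hadj⟩
        | inr w =>
          have hwv : w = σ v := prism_adj_inr_inl.1 h
          rw [hσ_not hv'] at hwv
          rw [hwv] at haD
          exact ⟨⟨v, hv⟩, Or.inr haD, Or.inl rfl⟩
    have hE2card : E2.ncard ≤ (D \ T).ncard := by
      set f : ↥(Sᶜ : Set V) → V ⊕ V :=
        fun v => if Sum.inl (v : V) ∈ D then Sum.inl (v : V) else Sum.inr (v : V) with hf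
      have hinj : Function.Injective f := by
        intro u v h
        simp only [hf] at h
        split_ifs at h <;>
          first
            | exact Subtype.ext (Sum.inl.inj h)
            | exact Subtype.ext (Sum.inr.inj h)
            | simp at h
      have hsub : f '' E2 ⊆ D \ T := by
        rintro _ ⟨v, hv, rfl⟩
        by_cases h1 : Sum.inl (v : V) ∈ D
        · refine ⟨?_, ?_⟩
          · simp only [hf, if_pos h1]
            exact h1
          · simp only [hf, if_pos h1, hT, Set.mem_setOf_eq, Sum.elim_inl]
            exact v.2
        · rcases hv with h | h
          · exact absurd h h1
          · refine ⟨?_, ?_⟩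
            · simp only [hf, if_neg h1]
              exact h
            · simp only [hf, if_neg h1, hT, Set.mem_setOf_eq, Sum.elim_inr]
              exact v.2
      calc E2.ncard = (f '' E2).ncard := (Set.ncard_image_of_injective _ hinj).symm
        _ ≤ (D \ T).ncard := Set.ncard_le_ncard hsub (Set.toFinite _)
    have hsplit : (D ∩ T).ncard + (D \ T).ncard = D.ncard := by
      rw [← Set.ncard_union_eq
        (Set.disjoint_of_subset_left Set.inter_subset_right Set.disjoint_sdiff_right)
        (Set.toFinite _) (Set.toFinite _), Set.inter_union_diff]
    calc domNum (prism H π) + domNum R ≤ E1.ncard + E2.ncard :=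
          add_le_add (domNum_le' hE1dom) (domNum_le' hE2dom)
      _ ≤ (D ∩ T).ncard + (D \ T).ncard := add_le_add hE1card hE2card
      _ = D.ncard := hsplit
      _ = domNum (prism G σ) := hc
      _ = domNum G := hUF σ
  -- key inequality 2 : γ(G) ≤ γ(H) + γ(R)
  have key2 : domNum G ≤ domNum H + domNum R := by
    obtain ⟨D1, hD1, hc1⟩ := exists_gammaSet H
    obtain ⟨D2, hD2, hc2⟩ := exists_gammaSet R
    have hdom : IsDomSet G ((Subtype.val '' D1) ∪ (Subtype.val '' D2)) := by
      intro v _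
      by_cases hv : v ∈ S
      · obtain ⟨a, ha, h⟩ := hD1 ⟨v, hv⟩ trivial
        refine ⟨↑a, Or.inl ⟨a, ha, rfl⟩, ?_⟩
        rcases h with h | h
        · exact Or.inl (congrArg Subtype.val h)
        · exact Or.inr h
      · obtain ⟨a, ha, h⟩ := hD2 ⟨v, hv⟩ trivial
        refine ⟨↑a, Or.inr ⟨a, ha, rfl⟩, ?_⟩
        rcases h with h | h
        · exact Or.inl (congrArg Subtype.val h)
        · exact Or.inr h
    calc domNum G ≤ ((Subtype.val '' D1) ∪ (Subtype.val '' D2)).ncard := domNum_le' hdom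
      _ ≤ (Subtype.val '' D1).ncard + (Subtype.val '' D2).ncard := Set.ncard_union_le _ _
      _ = D1.ncard + D2.ncard := by
          rw [Set.ncard_image_of_injective _ Subtype.val_injective,
            Set.ncard_image_of_injective _ Subtype.val_injective]
      _ = domNum H + domNum R := by rw [hc1, hc2]
  have key3 : domNum H ≤ domNum (prism H π) := domNum_le_domNum_prism H π
  show domNum (prism H π) = domNum H
  omega

theorem stmt_2 [Fintype V] (G : SimpleGraph V) (hdisc : ¬ G.Connected)
    (hedge : ∃ u v, G.Adj u v) (hUF : IsUniversalFixer G) :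
    ∀ c : G.ConnectedComponent, IsUniversalFixer (G.induce c.supp) := by
  intro c π
  refine aux_fixer G hUF c.supp ?_ π
  intro w v h
  simp only [ConnectedComponent.mem_supp_iff]
  rw [ConnectedComponent.sound h.reachable]
end

section
/- A nontrivial connected graph G has a symmetric γ-set if and only if G has an independent γ-set D admitting a partition D = [D₁, D₂] such that each vertex in V(G)∖D is adjacent to exactly one vertex in D₁ and exactly one vertex in D₂, and each vertex in D is adjacent to at least two vertices in V(G)∖D. -/
open SimpleGraph

variable {V : Type*}

lemma domNum_le_ncard {G : SimpleGraph V} {S : Set V} (h : IsDomSet G S) :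
    domNum G ≤ S.ncard :=
  Nat.sInf_le ⟨S, h, rfl⟩

lemma gamma_min {G : SimpleGraph V} {D S : Set V} (hD : IsGammaSet G D) (hS : IsDomSet G S) :
    D.ncard ≤ S.ncard :=
  hD.2 ▸ domNum_le_ncard hS

lemma exists_neighbor [Fintype V] (G : SimpleGraph V) (hconn : G.Connected)
    (hn : 1 < Fintype.card V) (x : V) : ∃ y, G.Adj x y := by
  obtain ⟨y, hy⟩ := Fintype.exists_ne_of_one_lt_card hn x
  obtain ⟨w⟩ := hconn.preconnected x y
  cases w with
  | nil => exact absurd rfl hy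
  | cons h p => exact ⟨_, h⟩

lemma aux_indep [Fintype V] {G : SimpleGraph V} {D A B : Set V}
    (hD : IsGammaSet G D) (hU : D = A ∪ B) (hd : Disjoint A B)
    (hB : Dominates G B (Set.univ \ A)) :
    ∀ x ∈ A, ∀ y ∈ D, ¬ G.Adj x y := by
  intro x hxA y hyD hadj
  have hxD : x ∈ D := hU ▸ Or.inl hxA
  have hdom : IsDomSet G (D \ {x}) := by
    intro b _
    by_cases hbx : b = x
    · refine ⟨y, ⟨hyD, ?_⟩, Or.inr (hbx ▸ hadj.symm)⟩
      simp only [Set.mem_singleton_iff]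
      rintro rfl
      exact G.irrefl hadj
    · by_cases hbD : b ∈ D
      · exact ⟨b, ⟨hbD, by simp [hbx]⟩, Or.inl rfl⟩
      · obtain ⟨a, haB, hab⟩ := hB b ⟨Set.mem_univ b, fun hbA => hbD (hU ▸ Or.inl hbA)⟩
        refine ⟨a, ⟨hU ▸ Or.inr haB, ?_⟩, hab⟩
        simp only [Set.mem_singleton_iff]
        exact fun h => hd.ne_of_mem hxA haB h.symm
  have h1 := gamma_min hD hdom
  have h2 : (D \ {x}).ncard < D.ncard :=
    Set.ncard_diff_singleton_lt_of_mem hxD (Set.toFinite D)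
  omega

lemma aux_unique [Fintype V] {G : SimpleGraph V} {D A B : Set V}
    (hD : IsGammaSet G D) (hU : D = A ∪ B) (hd : Disjoint A B)
    (hA : Dominates G A (Set.univ \ B)) (hB : Dominates G B (Set.univ \ A)) :
    ∀ v ∉ D, ∃! d, d ∈ A ∧ G.Adj v d := by
  intro v hv
  have hvA : v ∉ A := fun h => hv (hU ▸ Or.inl h)
  have hvB : v ∉ B := fun h => hv (hU ▸ Or.inr h)
  obtain ⟨a, haA, hav⟩ := hA v ⟨Set.mem_univ v, hvB⟩
  have haAdj : G.Adj v a := by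
    rcases hav with heq | h
    · exact absurd (heq ▸ haA) hvA
    · exact h.symm
  refine ⟨a, ⟨haA, haAdj⟩, ?_⟩
  rintro d ⟨hdA, hdv⟩
  by_contra hne
  have hdomS : IsDomSet G (insert v (D \ {d, a})) := by
    intro b _
    by_cases hb : b = v ∨ b = d ∨ b = a
    · refine ⟨v, Set.mem_insert _ _, ?_⟩
      rcases hb with rfl | rfl | rfl
      · exact Or.inl rfl
      · exact Or.inr hdv
      · exact Or.inr haAdj
    · push_neg at hb
      by_cases hbD : b ∈ D
      · refine ⟨b, Set.mem_insert_of_mem _ ⟨hbD, ?_⟩, Or.inl rfl⟩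
        simp only [Set.mem_insert_iff, Set.mem_singleton_iff]
        push_neg
        exact ⟨hb.2.1, hb.2.2⟩
      · obtain ⟨e, heB, heb⟩ := hB b ⟨Set.mem_univ b, fun h => hbD (hU ▸ Or.inl h)⟩
        refine ⟨e, Set.mem_insert_of_mem _ ⟨hU ▸ Or.inr heB, ?_⟩, heb⟩
        simp only [Set.mem_insert_iff, Set.mem_singleton_iff]
        push_neg
        exact ⟨fun h => hd.ne_of_mem hdA heB h.symm, fun h => hd.ne_of_mem haA heB h.symm⟩
  have hsub : ({d, a} : Set V) ⊆ D := by
    intro z hz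
    rcases hz with rfl | hz
    · exact hU ▸ Or.inl hdA
    · rw [Set.mem_singleton_iff] at hz
      exact hz ▸ (hU ▸ Or.inl haA)
  have hpair : ({d, a} : Set V).ncard = 2 := Set.ncard_pair hne
  have h2 : 2 ≤ D.ncard := hpair ▸ Set.ncard_le_ncard hsub (Set.toFinite D)
  have hdiff : (D \ {d, a}).ncard = D.ncard - 2 := by
    rw [Set.ncard_diff hsub (Set.toFinite _), hpair]
  have hvnot : v ∉ D \ ({d, a} : Set V) := fun h => hv h.1
  have hScard : (insert v (D \ ({d, a} : Set V))).ncard = D.ncard - 2 + 1 := by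
    rw [Set.ncard_insert_of_notMem hvnot (Set.toFinite _), hdiff]
  have hle := gamma_min hD hdomS
  omega

lemma aux_deg [Fintype V] {G : SimpleGraph V} (hconn : G.Connected)
    (hn : 1 < Fintype.card V) {D A B : Set V}
    (hD : IsGammaSet G D) (hU : D = A ∪ B) (hd : Disjoint A B)
    (hA : Dominates G A (Set.univ \ B)) (hB : Dominates G B (Set.univ \ A))
    (hind : ∀ x ∈ D, ∀ y ∈ D, ¬ G.Adj x y) :
    ∀ x ∈ A, 2 ≤ (G.neighborSet x \ D).ncard := by
  intro x hxA
  by_contra hlt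
  push_neg at hlt
  have hxD : x ∈ D := hU ▸ Or.inl hxA
  obtain ⟨u, hu⟩ := exists_neighbor G hconn hn x
  have huD : u ∉ D := fun h => hind x hxD u h hu
  have huN : u ∈ G.neighborSet x \ D := ⟨hu, huD⟩
  have hpos : 0 < (G.neighborSet x \ D).ncard :=
    (Set.ncard_pos (Set.toFinite _)).mpr ⟨u, huN⟩
  have hone : (G.neighborSet x \ D).ncard = 1 := by omega
  obtain ⟨w, hw⟩ := Set.ncard_eq_one.mp hone
  have huw : u = w := by rw [hw] at huN; exact huN
  subst huw
  have honly : ∀ z, G.Adj x z → z = u := by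
    intro z hz
    have hzD : z ∉ D := fun h => hind x hxD z h hz
    have hzN : z ∈ G.neighborSet x \ D := ⟨hz, hzD⟩
    rw [hw] at hzN
    exact hzN
  have huA : u ∉ A := fun h => huD (hU ▸ Or.inl h)
  obtain ⟨b2, hb2B, hb2u⟩ := hB u ⟨Set.mem_univ u, huA⟩
  have hb2Adj : G.Adj u b2 := by
    rcases hb2u with heq | h
    · exact absurd (heq ▸ hb2B) (fun hh => huD (hU ▸ Or.inr hh))
    · exact h.symm
  have hxb2 : x ≠ b2 := hd.ne_of_mem hxA hb2B
  have hdomS : IsDomSet G (insert u (D \ {x, b2})) := by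
    intro c _
    by_cases hc : c = u ∨ c = x ∨ c = b2
    · refine ⟨u, Set.mem_insert _ _, ?_⟩
      rcases hc with rfl | rfl | rfl
      · exact Or.inl rfl
      · exact Or.inr hu.symm
      · exact Or.inr hb2Adj
    · push_neg at hc
      by_cases hcD : c ∈ D
      · refine ⟨c, Set.mem_insert_of_mem _ ⟨hcD, ?_⟩, Or.inl rfl⟩
        simp only [Set.mem_insert_iff, Set.mem_singleton_iff]
        push_neg
        exact ⟨hc.2.1, hc.2.2⟩
      · obtain ⟨e, heA, hec⟩ := hA c ⟨Set.mem_univ c, fun h => hcD (hU ▸ Or.inr h)⟩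
        have hecAdj : G.Adj e c := by
          rcases hec with heq | h
          · exact absurd (heq ▸ heA) (fun hh => hcD (hU ▸ Or.inl hh))
          · exact h
        have hex : e ≠ x := by
          rintro rfl
          exact hc.1 (honly c hecAdj)
        refine ⟨e, Set.mem_insert_of_mem _ ⟨hU ▸ Or.inl heA, ?_⟩, Or.inr hecAdj⟩
        simp only [Set.mem_insert_iff, Set.mem_singleton_iff]
        push_neg
        exact ⟨hex, hd.ne_of_mem heA hb2B⟩
  have hsub : ({x, b2} : Set V) ⊆ D := by
    intro z hz
    rcases hz with rfl | hz
    · exact hxD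
    · rw [Set.mem_singleton_iff] at hz
      exact hz ▸ (hU ▸ Or.inr hb2B)
  have hpair : ({x, b2} : Set V).ncard = 2 := Set.ncard_pair hxb2
  have h2 : 2 ≤ D.ncard := hpair ▸ Set.ncard_le_ncard hsub (Set.toFinite D)
  have hdiff : (D \ {x, b2}).ncard = D.ncard - 2 := by
    rw [Set.ncard_diff hsub (Set.toFinite _), hpair]
  have hunot : u ∉ D \ ({x, b2} : Set V) := fun h => huD h.1
  have hScard : (insert u (D \ ({x, b2} : Set V))).ncard = D.ncard - 2 + 1 := by
    rw [Set.ncard_insert_of_notMem hunot (Set.toFinite _), hdiff]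
  have hle := gamma_min hD hdomS
  omega

theorem stmt_9 [Fintype V] (G : SimpleGraph V) (hconn : G.Connected)
    (hn : 1 < Fintype.card V) :
    (∃ D D1 D2 : Set V, IsSymGammaSet G D D1 D2) ↔
      ∃ D D1 D2 : Set V, IsGammaSet G D ∧ (∀ x ∈ D, ∀ y ∈ D, ¬ G.Adj x y) ∧
        D = D1 ∪ D2 ∧ Disjoint D1 D2 ∧ D1.Nonempty ∧ D2.Nonempty ∧
        (∀ v ∉ D, (∃! d, d ∈ D1 ∧ G.Adj v d) ∧ (∃! d, d ∈ D2 ∧ G.Adj v d)) ∧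
        (∀ x ∈ D, 2 ≤ (G.neighborSet x \ D).ncard) := by
  constructor
  · rintro ⟨D, D1, D2, hγ, hU, hd, hne1, hne2, hdom1, hdom2⟩
    have hU' : D = D2 ∪ D1 := hU.trans (Set.union_comm _ _)
    have hind : ∀ x ∈ D, ∀ y ∈ D, ¬ G.Adj x y := by
      intro x hx
      rcases (hU ▸ hx : x ∈ D1 ∪ D2) with h1 | h2
      · exact aux_indep hγ hU hd hdom2 x h1
      · exact aux_indep hγ hU' hd.symm hdom1 x h2
    refine ⟨D, D1, D2, hγ, hind, hU, hd, hne1, hne2, ?_, ?_⟩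
    · intro v hv
      exact ⟨aux_unique hγ hU hd hdom1 hdom2 v hv,
        aux_unique hγ hU' hd.symm hdom2 hdom1 v hv⟩
    · intro x hx
      rcases (hU ▸ hx : x ∈ D1 ∪ D2) with h1 | h2
      · exact aux_deg hconn hn hγ hU hd hdom1 hdom2 hind x h1
      · exact aux_deg hconn hn hγ hU' hd.symm hdom2 hdom1 hind x h2
  · rintro ⟨D, D1, D2, hγ, hind, hU, hd, hne1, hne2, huniq, hdeg⟩
    refine ⟨D, D1, D2, hγ, hU, hd, hne1, hne2, ?_, ?_⟩
    · rintro b ⟨-, hb2⟩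
      by_cases hb1 : b ∈ D1
      · exact ⟨b, hb1, Or.inl rfl⟩
      · have hbD : b ∉ D := by
          rw [hU]; rintro (h | h); exacts [hb1 h, hb2 h]
        obtain ⟨w, ⟨hw1, hwadj⟩, -⟩ := (huniq b hbD).1
        exact ⟨w, hw1, Or.inr hwadj.symm⟩
    · rintro b ⟨-, hb1⟩
      by_cases hb2 : b ∈ D2
      · exact ⟨b, hb2, Or.inl rfl⟩
      · have hbD : b ∉ D := by
          rw [hU]; rintro (h | h); exacts [hb1 h, hb2 h]
        obtain ⟨w, ⟨hw2, hwadj⟩, -⟩ := (huniq b hbD).2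
        exact ⟨w, hw2, Or.inr hwadj.symm⟩
end

section
/- Let A = [A₁, A₂] and B = [B₁, B₂] be symmetric γ-sets of a graph G with |A₁| ≤ |A₂| and |B₁| ≤ |B₂|. If |B₁| = |A₁| < |A₂|, then A₂ ∩ B₂ ≠ ∅. -/
open SimpleGraph

variable {V : Type*}

lemma sym_packing [Fintype V] {G : SimpleGraph V} {A A1 A2 : Set V}
    (hA : IsSymGammaSet G A A1 A2) {x y : V} (hx : x ∈ A2) (hy : y ∈ A2)
    (hxy : x ≠ y) {z : V} (hzx : z = x ∨ G.Adj z x) (hzy : z = y ∨ G.Adj z y) :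
    False := by
  obtain ⟨⟨hdom, hcard⟩, hAeq, hdisj, _, _, hD1, hD2⟩ := hA
  have hxA : x ∈ A := hAeq ▸ Or.inr hx
  have hyA : y ∈ A := hAeq ▸ Or.inr hy
  set D' := (A \ {x, y}) ∪ {z} with hD'
  have hdom' : IsDomSet G D' := by
    intro v _
    by_cases hv : v ∈ A2
    · by_cases hvx : v = x
      · exact ⟨z, Or.inr rfl, by subst hvx; exact hzx⟩
      by_cases hvy : v = y
      · exact ⟨z, Or.inr rfl, by subst hvy; exact hzy⟩
      exact ⟨v, Or.inl ⟨hAeq ▸ Or.inr hv, by simp [hvx, hvy]⟩, Or.inl rfl⟩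
    · obtain ⟨a, ha1, ha⟩ := hD1 v ⟨trivial, hv⟩
      have hax : a ∉ A2 := Set.disjoint_left.mp hdisj ha1
      refine ⟨a, Or.inl ⟨hAeq ▸ Or.inl ha1, ?_⟩, ha⟩
      simp only [Set.mem_insert_iff, Set.mem_singleton_iff]
      push_neg
      exact ⟨fun h => hax (h ▸ hx), fun h => hax (h ▸ hy)⟩
  have hfin : A.Finite := Set.toFinite A
  have hsub : ({x, y} : Set V) ⊆ A := by
    rintro v (rfl | rfl); exacts [hxA, hyA]
  have hpair : ({x, y} : Set V).ncard = 2 := Set.ncard_pair hxy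
  have h2 : 2 ≤ A.ncard := hpair ▸ Set.ncard_le_ncard hsub hfin
  have hdiff : (A \ {x, y}).ncard = A.ncard - 2 := by
    rw [Set.ncard_diff hsub, hpair]
  have hle : D'.ncard ≤ A.ncard - 1 := by
    calc D'.ncard ≤ (A \ {x, y}).ncard + ({z} : Set V).ncard :=
          Set.ncard_union_le _ _
      _ = A.ncard - 2 + 1 := by rw [hdiff, Set.ncard_singleton]
      _ ≤ A.ncard - 1 := by omega
  have hγ : domNum G ≤ D'.ncard := Nat.sInf_le ⟨D', hdom', rfl⟩
  omega

theorem stmt_11 [Fintype V] (G : SimpleGraph V) (A A1 A2 B B1 B2 : Set V)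
    (hA : IsSymGammaSet G A A1 A2) (hB : IsSymGammaSet G B B1 B2)
    (hA12 : A1.ncard ≤ A2.ncard) (hB12 : B1.ncard ≤ B2.ncard)
    (heq : B1.ncard = A1.ncard) (hlt : A1.ncard < A2.ncard) :
    (A2 ∩ B2).Nonempty := by
  by_contra hne
  rw [Set.not_nonempty_iff_eq_empty] at hne
  have hdomB1 : ∀ a ∈ A2, ∃ b ∈ B1, b = a ∨ G.Adj b a := by
    intro a ha
    have haB2 : a ∉ B2 := fun h => by
      have : a ∈ A2 ∩ B2 := ⟨ha, h⟩
      simp [hne] at this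
    exact hB.2.2.2.2.2.1 a ⟨trivial, haB2⟩
  classical
  set f : V → V := fun a => if h : ∃ b ∈ B1, b = a ∨ G.Adj b a then h.choose else a
    with hf
  have hfmem : ∀ a ∈ A2, f a ∈ B1 ∧ (f a = a ∨ G.Adj (f a) a) := by
    intro a ha
    have h := hdomB1 a ha
    simp only [hf, dif_pos h]
    exact ⟨h.choose_spec.1, h.choose_spec.2⟩
  have hinj : Set.InjOn f A2 := by
    intro x hx y hy hfeq
    by_contra hxy
    obtain ⟨_, hx2⟩ := hfmem x hx
    obtain ⟨_, hy2⟩ := hfmem y hy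
    exact sym_packing hA hx hy hxy hx2 (hfeq ▸ hy2)
  have hcard : A2.ncard ≤ B1.ncard :=
    Set.ncard_le_ncard_of_injOn f (fun a ha => (hfmem a ha).1) hinj (Set.toFinite B1)
  omega
end

section
/- Let G be a nontrivial connected prism fixer with γ(G) = m ≥ 4. If G does not contain an even symmetric γ-set, then G is not a universal fixer. -/
open SimpleGraph

variable {V : Type*}

namespace UFAux
def Nh (G : SimpleGraph V) (S : Set V) : Set V := {v | ∃ a ∈ S, a = v ∨ G.Adj a v}
lemma subset_Nh {G : SimpleGraph V} {S : Set V} : S ⊆ Nh G S := fun v hv => ⟨v, hv, Or.inl rfl⟩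
lemma Nh_mono {G : SimpleGraph V} {S T : Set V} (h : S ⊆ T) : Nh G S ⊆ Nh G T :=
  fun v ⟨a, ha, hav⟩ => ⟨a, h ha, hav⟩
lemma mem_Nh_of_adj {G : SimpleGraph V} {S : Set V} {a v : V} (ha : a ∈ S) (h : G.Adj a v) :
    v ∈ Nh G S := ⟨a, ha, Or.inr h⟩
lemma isDomSet_iff {G : SimpleGraph V} {D : Set V} : IsDomSet G D ↔ ∀ v, v ∈ Nh G D := by
  constructor
  · intro h v; exact h v (Set.mem_univ v)
  · intro h v _; exact h v
lemma isDomSet_univ (G : SimpleGraph V) : IsDomSet G Set.univ :=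
  fun v _ => ⟨v, Set.mem_univ v, Or.inl rfl⟩
lemma domNum_le {G : SimpleGraph V} {D : Set V} (hD : IsDomSet G D) : domNum G ≤ D.ncard :=
  Nat.sInf_le ⟨D, hD, rfl⟩
lemma exists_gamma_set (G : SimpleGraph V) :
    ∃ D : Set V, IsDomSet G D ∧ D.ncard = domNum G := by
  have hne : {n | ∃ D : Set V, IsDomSet G D ∧ D.ncard = n}.Nonempty :=
    ⟨(Set.univ : Set V).ncard, Set.univ, isDomSet_univ G, rfl⟩
  obtain ⟨D, hD, hc⟩ := Nat.sInf_mem hne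
  exact ⟨D, hD, hc⟩
section Adj
variable (G : SimpleGraph V) (π : Equiv.Perm V)

lemma prism_adj_ll {u v : V} : (prism G π).Adj (Sum.inl u) (Sum.inl v) ↔ G.Adj u v := by
  rw [prism, fromRel_adj]
  constructor
  · rintro ⟨-, h | h⟩
    · exact h
    · exact h.symm
  · intro h
    exact ⟨by simpa using h.ne, Or.inl h⟩

lemma prism_adj_rr {u v : V} : (prism G π).Adj (Sum.inr u) (Sum.inr v) ↔ G.Adj u v := by
  rw [prism, fromRel_adj]
  constructor
  · rintro ⟨-, h | h⟩
    · exact h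
    · exact h.symm
  · intro h
    exact ⟨by simpa using h.ne, Or.inl h⟩

lemma prism_adj_lr {u v : V} : (prism G π).Adj (Sum.inl u) (Sum.inr v) ↔ v = π u := by
  rw [prism, fromRel_adj]
  constructor
  · rintro ⟨-, h | h⟩
    · exact h
    · exact h.elim
  · intro h
    exact ⟨by simp, Or.inl h⟩

lemma prism_adj_rl {u v : V} : (prism G π).Adj (Sum.inr u) (Sum.inl v) ↔ u = π v := by
  rw [prism, fromRel_adj]
  constructor
  · rintro ⟨-, h | h⟩
    · exact h.elim
    · exact h
  · intro h
    exact ⟨by simp, Or.inr h⟩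

end Adj

section Extract
variable [Fintype V] {G : SimpleGraph V} {m : ℕ}

/-- every dominating set has at least `m = domNum G` elements -/
lemma card_ge_of_dom (hγ : domNum G = m) {S : Set V} (hS : IsDomSet G S) : m ≤ S.ncard :=
  hγ ▸ domNum_le hS

/-- Main extraction: from `γ(πG) = γ(G) = m`, get a witness pair `(A,B)`. -/
lemma extract (π : Equiv.Perm V) (hm : 1 ≤ m) (hγ : domNum G = m)
    (hpf : domNum (prism G π) = m) :
    ∃ A B : Set V,
      Disjoint A B ∧ A.ncard + B.ncard = m ∧
      (∀ v, v ∉ B → v ∈ Nh G A) ∧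
      (∀ v, v ∉ ⇑π '' A → v ∈ Nh G (⇑π '' B)) ∧
      (∀ v, v ∉ A → v ∉ B → ∃ a ∈ A, G.Adj a v) ∧
      (∀ b ∈ B, ∀ u, G.Adj b u → u ∉ A ∧ u ∉ B) ∧
      (∀ v, v ∉ A → v ∉ B → ∃ c ∈ B, G.Adj (π v) (π c)) ∧
      (∀ a ∈ A, ∀ c, G.Adj (π a) (π c) → c ∉ A ∧ c ∉ B) := by
  classical
  obtain ⟨W, hW, hWc⟩ := exists_gamma_set (prism G π)
  rw [hpf] at hWc
  refine ⟨{v | Sum.inl v ∈ W}, ⇑π ⁻¹' {v | Sum.inr v ∈ W}, ?_⟩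
  set A : Set V := {v | Sum.inl v ∈ W} with hA
  set W2 : Set V := {v | Sum.inr v ∈ W} with hW2def
  set B : Set V := ⇑π ⁻¹' W2 with hB
  have hπB : ⇑π '' B = W2 := Set.image_preimage_eq W2 π.surjective
  -- cardinalities
  have hWsplit : W = (Sum.inl '' A) ∪ (Sum.inr '' W2) := by
    ext x
    cases x with
    | inl v =>
      simp only [Set.mem_union, Set.mem_image]
      constructor
      · intro h; exact Or.inl ⟨v, h, rfl⟩
      · rintro (⟨u, hu, h⟩ | ⟨u, hu, h⟩)
        · exact (Sum.inl_injective h) ▸ hu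
        · exact absurd h (by simp)
    | inr v =>
      simp only [Set.mem_union, Set.mem_image]
      constructor
      · intro h; exact Or.inr ⟨v, h, rfl⟩
      · rintro (⟨u, hu, h⟩ | ⟨u, hu, h⟩)
        · exact absurd h (by simp)
        · exact (Sum.inr_injective h) ▸ hu
  have hcard : A.ncard + W2.ncard = m := by
    have h1 : (Sum.inl '' A : Set (V ⊕ V)).ncard = A.ncard :=
      Set.ncard_image_of_injective _ Sum.inl_injective
    have h2 : (Sum.inr '' W2 : Set (V ⊕ V)).ncard = W2.ncard :=
      Set.ncard_image_of_injective _ Sum.inr_injective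
    have hdisj : Disjoint (Sum.inl '' A : Set (V ⊕ V)) (Sum.inr '' W2) := by
      rw [Set.disjoint_iff]
      rintro x ⟨⟨u, -, rfl⟩, ⟨v, -, h⟩⟩
      exact absurd h (by simp)
    have h3 := Set.ncard_union_eq hdisj (Set.toFinite _) (Set.toFinite _)
    rw [← h1, ← h2, ← h3, ← hWsplit, hWc]
  have hBc : B.ncard = W2.ncard := by
    rw [← hπB, Set.ncard_image_of_injective _ π.injective]
  have hsum : A.ncard + B.ncard = m := by rw [hBc]; exact hcard
  -- coverage facts from W being dominating
  have hcov1 : ∀ v : V, v ∈ Nh G A ∨ v ∈ B := by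
    intro v
    obtain ⟨y, hy, hyv⟩ := hW (Sum.inl v) (Set.mem_univ _)
    cases y with
    | inl a =>
      rcases hyv with h | h
      · exact Or.inl ⟨a, hy, Or.inl (by simpa using h)⟩
      · exact Or.inl ⟨a, hy, Or.inr ((prism_adj_ll G π).1 h)⟩
    | inr b =>
      rcases hyv with h | h
      · exact absurd h (by simp)
      · have hb : b = π v := (prism_adj_rl G π).1 h
        refine Or.inr ?_
        show π v ∈ W2
        rw [← hb]; exact hy
  have hcov2 : ∀ v : V, v ∈ Nh G (⇑π '' B) ∨ v ∈ ⇑π '' A := by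
    intro v
    obtain ⟨y, hy, hyv⟩ := hW (Sum.inr v) (Set.mem_univ _)
    cases y with
    | inr b =>
      rcases hyv with h | h
      · exact Or.inl ⟨b, by rw [hπB]; exact hy, Or.inl (by simpa using h)⟩
      · exact Or.inl ⟨b, by rw [hπB]; exact hy, Or.inr ((prism_adj_rr G π).1 h)⟩
    | inl a =>
      rcases hyv with h | h
      · exact absurd h (by simp)
      · have hv : v = π a := (prism_adj_lr G π).1 h
        exact Or.inr ⟨a, hy, hv.symm⟩
  -- A ∪ B is a γ-set
  have hDdom : IsDomSet G (A ∪ B) := by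
    rw [isDomSet_iff]
    intro v
    rcases hcov1 v with h | h
    · exact Nh_mono Set.subset_union_left h
    · exact subset_Nh (Set.mem_union_right _ h)
  have hDcard : (A ∪ B).ncard = m :=
    le_antisymm (le_trans (Set.ncard_union_le A B) (le_of_eq hsum)) (card_ge_of_dom hγ hDdom)
  have hdisjAB : Disjoint A B := by
    have h := Set.ncard_union_add_ncard_inter A B (Set.toFinite _) (Set.toFinite _)
    rw [hDcard, hsum] at h
    have h0 : (A ∩ B).ncard = 0 := by omega
    rw [Set.ncard_eq_zero (Set.toFinite _)] at h0
    exact Set.disjoint_iff_inter_eq_empty.2 h0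
  have hdisj2 : Disjoint (⇑π '' A) (⇑π '' B) :=
    (Set.disjoint_image_iff π.injective).2 hdisjAB
  have hπDdom : IsDomSet G (⇑π '' A ∪ ⇑π '' B) := by
    rw [isDomSet_iff]
    intro v
    rcases hcov2 v with h | h
    · exact Nh_mono Set.subset_union_right h
    · exact subset_Nh (Set.mem_union_left _ h)
  have hπDcard : (⇑π '' A ∪ ⇑π '' B).ncard = m := by
    rw [← Set.image_union, Set.ncard_image_of_injective _ π.injective]
    exact hDcard
  have hremove : ∀ (S : Set V) (x : V), x ∈ S → S.ncard = m → IsDomSet G (S \ {x}) → False := by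
    intro S x hx hSc hdom
    have h1 : m ≤ (S \ {x}).ncard := card_ge_of_dom hγ hdom
    have h2 : (S \ {x}).ncard = m - 1 := by
      rw [Set.ncard_diff_singleton_of_mem hx, hSc]
    omega
  have hAsub : ∀ b ∈ B, A ⊆ (A ∪ B) \ {b} := by
    intro b hb v hv
    refine ⟨Set.mem_union_left _ hv, ?_⟩
    simp only [Set.mem_singleton_iff]
    rintro rfl
    exact (hdisjAB.ne_of_mem hv hb) rfl
  have hπBsub : ∀ z ∈ ⇑π '' A, ⇑π '' B ⊆ (⇑π '' A ∪ ⇑π '' B) \ {z} := by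
    intro z hz v hv
    refine ⟨Set.mem_union_right _ hv, ?_⟩
    simp only [Set.mem_singleton_iff]
    rintro rfl
    exact (hdisj2.ne_of_mem hz hv) rfl
  -- exactness / passivity facts
  have hexact1 : ∀ b ∈ B, b ∉ Nh G A := by
    intro b hb hbN
    refine hremove (A ∪ B) b (Set.mem_union_right _ hb) hDcard ?_
    rw [isDomSet_iff]
    intro v
    by_cases hvb : v = b
    · subst hvb
      exact Nh_mono (hAsub v hb) hbN
    · by_cases hv : v ∈ B
      · exact subset_Nh ⟨Set.mem_union_right _ hv, by simp [hvb]⟩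
      · exact Nh_mono (hAsub b hb) (hcov1 v |>.resolve_right hv)
  have hNhA : ∀ v, v ∉ B → v ∈ Nh G A := by
    intro v hv
    exact (hcov1 v).resolve_right hv
  have hF1 : ∀ v, v ∉ A → v ∉ B → ∃ a ∈ A, G.Adj a v := by
    intro v hvA hvB
    obtain ⟨a, ha, h | h⟩ := hNhA v hvB
    · exact absurd (h ▸ ha) hvA
    · exact ⟨a, ha, h⟩
  have hF2 : ∀ b ∈ B, ∀ u, G.Adj b u → u ∉ A ∧ u ∉ B := by
    intro b hb u hadj
    constructor
    · intro huA
      exact hexact1 b hb (mem_Nh_of_adj huA hadj.symm)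
    · intro huB
      refine hremove (A ∪ B) b (Set.mem_union_right _ hb) hDcard ?_
      rw [isDomSet_iff]
      intro v
      by_cases hvb : v = b
      · subst hvb
        refine mem_Nh_of_adj (a := u) ⟨Set.mem_union_right _ huB, ?_⟩ hadj.symm
        simp only [Set.mem_singleton_iff]
        intro h
        exact hadj.ne h.symm
      · by_cases hv : v ∈ B
        · exact subset_Nh ⟨Set.mem_union_right _ hv, by simp [hvb]⟩
        · exact Nh_mono (hAsub b hb) (hNhA v hv)
  have hexact2 : ∀ z ∈ ⇑π '' A, z ∉ Nh G (⇑π '' B) := by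
    intro z hz hzN
    refine hremove (⇑π '' A ∪ ⇑π '' B) z (Set.mem_union_left _ hz) hπDcard ?_
    rw [isDomSet_iff]
    intro v
    by_cases hvz : v = z
    · subst hvz
      exact Nh_mono (hπBsub v hz) hzN
    · by_cases hv : v ∈ ⇑π '' A
      · exact subset_Nh ⟨Set.mem_union_left _ hv, by simp [hvz]⟩
      · exact Nh_mono (hπBsub z hz) ((hcov2 v).resolve_right hv)
  have hNhB : ∀ v, v ∉ ⇑π '' A → v ∈ Nh G (⇑π '' B) := by
    intro v hv
    exact (hcov2 v).resolve_right hv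
  have hF3 : ∀ v, v ∉ A → v ∉ B → ∃ c ∈ B, G.Adj (π v) (π c) := by
    intro v hvA hvB
    have h1 : (π v : V) ∉ ⇑π '' A := by
      rintro ⟨a, ha, h⟩
      rw [π.injective h] at ha
      exact hvA ha
    obtain ⟨z, hz, h | h⟩ := hNhB (π v) h1
    · obtain ⟨c, hc, rfl⟩ := hz
      exact absurd ((π.injective h) ▸ hc) hvB
    · obtain ⟨c, hc, rfl⟩ := hz
      exact ⟨c, hc, h.symm⟩
  have hF4 : ∀ a ∈ A, ∀ c, G.Adj (π a) (π c) → c ∉ A ∧ c ∉ B := by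
    intro a ha c hadj
    constructor
    · intro hcA
      refine hremove (⇑π '' A ∪ ⇑π '' B) (π a) (Set.mem_union_left _ ⟨a, ha, rfl⟩) hπDcard ?_
      rw [isDomSet_iff]
      intro v
      by_cases hvz : v = π a
      · subst hvz
        refine mem_Nh_of_adj (a := π c) ⟨Set.mem_union_left _ ⟨c, hcA, rfl⟩, ?_⟩ hadj.symm
        simp only [Set.mem_singleton_iff]
        intro h
        exact hadj.ne h.symm
      · by_cases hv : v ∈ ⇑π '' A
        · exact subset_Nh ⟨Set.mem_union_left _ hv, by simp [hvz]⟩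
        · exact Nh_mono (hπBsub (π a) ⟨a, ha, rfl⟩) (hNhB v hv)
    · intro hcB
      exact hexact2 (π a) ⟨a, ha, rfl⟩ (mem_Nh_of_adj ⟨c, hcB, rfl⟩ hadj.symm)
  exact ⟨hdisjAB, hsum, hNhA, hNhB, hF1, hF2, hF3, hF4⟩

end Extract
end UFAux

namespace UFAux

section Structure
variable [Fintype V] {G : SimpleGraph V} {m : ℕ}

lemma exists_adj_of_connected (hconn : G.Connected) (hn : 1 < Fintype.card V) (v : V) :
    ∃ u, G.Adj v u := by
  obtain ⟨u, hu⟩ := Fintype.exists_ne_of_one_lt_card hn v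
  obtain ⟨p⟩ := hconn v u
  cases p with
  | nil => exact absurd rfl (Ne.symm hu)
  | @cons _ b _ h p => exact ⟨b, h⟩

lemma m_lt_card (hconn : G.Connected) (hn : 1 < Fintype.card V) (hγ : domNum G = m) :
    m < Fintype.card V := by
  classical
  have hne : Nonempty V := Fintype.card_pos_iff.mp (by omega)
  obtain ⟨v⟩ := hne
  obtain ⟨u, hu⟩ := exists_adj_of_connected hconn hn v
  have hdom : IsDomSet G (Set.univ \ {v}) := by
    intro x _
    by_cases hx : x = v
    · subst hx
      exact ⟨u, ⟨Set.mem_univ _, by simp [hu.ne']⟩, Or.inr hu.symm⟩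
    · exact ⟨x, ⟨Set.mem_univ _, by simp [hx]⟩, Or.inl rfl⟩
  have h1 : m ≤ (Set.univ \ {v} : Set V).ncard := card_ge_of_dom hγ hdom
  have h2 : (Set.univ \ {v} : Set V).ncard = Fintype.card V - 1 := by
    rw [Set.ncard_diff_singleton_of_mem (Set.mem_univ v), Set.ncard_univ,
      Nat.card_eq_fintype_card]
  have h3 : 0 < Fintype.card V := by omega
  omega

end Structure
end UFAux

namespace UFAux
section SymPair
variable [Fintype V] {G : SimpleGraph V} {m : ℕ}

lemma sym_pair (hconn : G.Connected) (hn : 1 < Fintype.card V)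
    (hm : 1 ≤ m) (hγ : domNum G = m)
    (hpf : domNum (prism G (Equiv.refl V)) = m)
    (hno : ¬ ∃ D : Set V, IsEvenSymGammaSet G D) :
    ∃ X0 Y0 : Set V, Disjoint X0 Y0 ∧ X0.ncard + Y0.ncard = m ∧ X0.ncard < Y0.ncard ∧
      (∀ v, v ∉ Y0 → v ∈ Nh G X0) ∧ (∀ v, v ∉ X0 → v ∈ Nh G Y0) ∧
      (∀ d, (d ∈ X0 ∨ d ∈ Y0) → ∀ u, G.Adj d u → u ∉ X0 ∧ u ∉ Y0) := by
  classical
  obtain ⟨A, B, hdisj, hsum, hNhA, hNhB0, hF1, hF2, hF3, hF4⟩ :=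
    extract (G := G) (Equiv.refl V) hm hγ hpf
  have hid : ∀ (S : Set V), ⇑(Equiv.refl V) '' S = S := fun S => by simp
  rw [hid A, hid B] at hNhB0
  have hF4' : ∀ a ∈ A, ∀ c, G.Adj a c → c ∉ A ∧ c ∉ B := by
    intro a ha c hadj
    exact hF4 a ha c (by simpa using hadj)
  have hind : ∀ d, (d ∈ A ∨ d ∈ B) → ∀ u, G.Adj d u → u ∉ A ∧ u ∉ B := by
    intro d hd u hadj
    rcases hd with h | h
    · exact hF4' d h u hadj
    · exact hF2 d h u hadj
  -- both nonempty
  have hmlt : m < Fintype.card V := m_lt_card hconn hn hγ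
  have hAne : A.Nonempty := by
    rw [Set.nonempty_iff_ne_empty]
    intro hAe
    have hBu : B = Set.univ := by
      ext v
      simp only [Set.mem_univ, iff_true]
      by_contra hv
      obtain ⟨a, ha, -⟩ := hNhA v hv
      rw [hAe] at ha
      exact ha
    rw [hAe, hBu, Set.ncard_empty, Set.ncard_univ, Nat.card_eq_fintype_card] at hsum
    omega
  have hBne : B.Nonempty := by
    rw [Set.nonempty_iff_ne_empty]
    intro hBe
    have hAu : A = Set.univ := by
      ext v
      simp only [Set.mem_univ, iff_true]
      by_contra hv
      obtain ⟨a, ha, -⟩ := hNhB0 v hv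
      rw [hBe] at ha
      exact ha
    rw [hBe, hAu, Set.ncard_empty, Set.ncard_univ, Nat.card_eq_fintype_card] at hsum
    omega
  -- D is a γ-set
  have hDdom : IsDomSet G (A ∪ B) := by
    intro v _
    by_cases hv : v ∈ B
    · exact ⟨v, Set.mem_union_right _ hv, Or.inl rfl⟩
    · obtain ⟨a, ha, h⟩ := hNhA v hv
      exact ⟨a, Set.mem_union_left _ ha, h⟩
  have hDcard : (A ∪ B).ncard = m :=
    le_antisymm (le_trans (Set.ncard_union_le A B) (le_of_eq hsum)) (card_ge_of_dom hγ hDdom)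
  -- unequal sizes
  have hne : A.ncard ≠ B.ncard := by
    intro heq
    refine hno ⟨A ∪ B, A, B, ⟨⟨hDdom, by rw [hDcard, hγ]⟩, rfl, hdisj, hAne, hBne, ?_, ?_⟩, heq⟩
    · intro b hb
      exact hNhA b (fun h => hb.2 h)
    · intro b hb
      exact hNhB0 b (fun h => hb.2 h)
  rcases lt_or_gt_of_ne hne with h | h
  · exact ⟨A, B, hdisj, hsum, h, hNhA, hNhB0, hind⟩
  · refine ⟨B, A, hdisj.symm, by omega, h, hNhB0, hNhA, ?_⟩
    intro d hd u hadj
    exact (hind d hd.symm u hadj).symm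

end SymPair
end UFAux

namespace UFAux
section Cycle
variable [Fintype V]

lemma cycle_perm (Y0 : Set V) (y w : V) (hy : y ∈ Y0) (hw : w ∉ Y0) :
    ∃ (π : Equiv.Perm V) (t : ℕ → V),
      (∀ i, π (t i) = t (i+1)) ∧
      (∀ i, t (i % (Y0.ncard+1)) = t i) ∧
      (∀ i, i < Y0.ncard → t i ∈ Y0) ∧
      t 0 = y ∧ t Y0.ncard = w ∧
      (∀ i j, i ≤ Y0.ncard → j ≤ Y0.ncard → t i = t j → i = j) ∧
      (∀ z ∈ Y0, ∃ i, i < Y0.ncard ∧ t i = z) ∧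
      (∀ v, v ∉ Y0 → v ≠ w → π v = v) := by
  classical
  set s : ℕ := Y0.ncard with hs
  have hspos : 1 ≤ s := by
    have := Set.ncard_pos (Set.toFinite Y0) |>.mpr ⟨y, hy⟩
    omega
  set lY : List V := y :: (Y0 \ {y}).toFinset.toList with hlY
  have hmemlY : ∀ v, v ∈ lY ↔ v ∈ Y0 := by
    intro v
    simp only [hlY, List.mem_cons, Finset.mem_toList, Set.mem_toFinset, Set.mem_diff,
      Set.mem_singleton_iff]
    constructor
    · rintro (rfl | ⟨h, -⟩)
      · exact hy
      · exact h
    · intro h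
      by_cases hv : v = y
      · exact Or.inl hv
      · exact Or.inr ⟨h, hv⟩
  have hlYnd : lY.Nodup := by
    rw [hlY, List.nodup_cons]
    refine ⟨?_, Finset.nodup_toList _⟩
    intro hmem
    rw [Finset.mem_toList, Set.mem_toFinset] at hmem
    exact hmem.2 rfl
  have hlYlen : lY.length = s := by
    rw [hlY, List.length_cons, Finset.length_toList, ← Set.ncard_eq_toFinset_card',
      Set.ncard_diff_singleton_of_mem hy]
    omega
  set l : List V := lY ++ [w] with hl
  have hlnd : l.Nodup := by
    rw [hl, List.nodup_append]
    refine ⟨hlYnd, List.nodup_singleton w, ?_⟩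
    intro v hv
    simp only [List.mem_singleton]
    intro b hb hveq
    apply hw; rw [← hb, ← hveq]; exact (hmemlY v).1 hv
  have hllen : l.length = s + 1 := by
    rw [hl, List.length_append, hlYlen, List.length_singleton]
  have hidx : ∀ i : ℕ, i % (s+1) < l.length := by
    intro i
    rw [hllen]
    exact Nat.mod_lt _ (Nat.succ_pos s)
  refine ⟨l.formPerm, fun i => l.get ⟨i % (s+1), hidx i⟩, ?_, ?_, ?_, ?_, ?_, ?_, ?_, ?_⟩
  · -- π (t i) = t (i+1)
    intro i
    have h1 := List.formPerm_apply_getElem l hlnd (i % (s+1)) (hidx i)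
    have h2 : (i % (s+1) + 1) % l.length = (i+1) % (s+1) := by
      rw [hllen]
      conv_rhs => rw [Nat.add_mod]
      rw [Nat.mod_eq_of_lt (show 1 < s + 1 by omega)]
    simp only [List.get_eq_getElem]
    rw [h1]
    congr 1
  · -- t (i % (s+1)) = t i
    intro i
    simp only [List.get_eq_getElem]
    congr 1
    exact Nat.mod_mod_of_dvd i dvd_rfl
  · -- mem Y0
    intro i hi
    have hilt : i % (s+1) = i := Nat.mod_eq_of_lt (by omega)
    simp only [List.get_eq_getElem]
    have hlt : i % (s+1) < lY.length := by rw [hlYlen, hilt]; exact hi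
    rw [List.getElem_append_left hlt]
    exact (hmemlY _).1 (List.getElem_mem hlt)
  · -- t 0 = y
    have h0 : (0 : ℕ) % (s+1) = 0 := Nat.zero_mod _
    simp only [List.get_eq_getElem]
    have hlt : 0 % (s+1) < lY.length := by rw [hlYlen, h0]; omega
    rw [List.getElem_append_left hlt]
    simp [hlY, h0]
  · -- t s = w
    have h0 : s % (s+1) = s := Nat.mod_eq_of_lt (by omega)
    simp only [List.get_eq_getElem]
    have hge : lY.length ≤ s % (s+1) := by rw [hlYlen, h0]
    rw [List.getElem_append_right hge]
    simp [hlYlen, h0]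
  · -- injectivity
    intro i j hi hj hij
    have hi' : i % (s+1) = i := Nat.mod_eq_of_lt (by omega)
    have hj' : j % (s+1) = j := Nat.mod_eq_of_lt (by omega)
    simp only [List.get_eq_getElem] at hij
    have := (List.Nodup.getElem_inj_iff hlnd).1 hij
    rw [hi', hj'] at this
    exact this
  · -- surjectivity on Y0
    intro z hz
    have hzl : z ∈ lY := (hmemlY z).2 hz
    obtain ⟨i, hi, hiz⟩ := List.mem_iff_getElem.1 hzl
    refine ⟨i, by rw [hlYlen] at hi; exact hi, ?_⟩
    have hilt : i % (s+1) = i := by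
      rw [hlYlen] at hi
      exact Nat.mod_eq_of_lt (by omega)
    simp only [List.get_eq_getElem]
    have hlt : i % (s+1) < lY.length := by rw [hilt]; exact hi
    rw [List.getElem_append_left hlt]
    have he : lY[i % (s+1)]'hlt = lY[i]'hi := by congr 1
    rw [he]
    exact hiz
  · -- fixes outside
    intro v hv hvw
    apply List.formPerm_apply_of_notMem
    rw [hl, List.mem_append, List.mem_singleton]
    rintro (h | h)
    · exact hv ((hmemlY v).1 h)
    · exact hvw h

end Cycle
end UFAux

namespace UFAux
section Main
variable [Fintype V] {G : SimpleGraph V} {m : ℕ} {X0 Y0 A B : Set V} {π : Equiv.Perm V}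
  {t : ℕ → V} {w : V}

/-- Trick 1: a vertex adjacent to two distinct Y0 vertices gives an (m-1) dominating set. -/
lemma trickY (hγ : domNum G = m) (hXYsum : X0.ncard + Y0.ncard = m)
    (hNhX : ∀ v, v ∉ Y0 → v ∈ Nh G X0)
    {c0 a b : V} (ha : a ∈ Y0) (hb : b ∈ Y0) (hab : a ≠ b)
    (h1 : G.Adj c0 a) (h2 : G.Adj c0 b) : False := by
  classical
  have hdom : IsDomSet G (X0 ∪ {c0} ∪ (Y0 \ {a, b})) := by
    intro v _
    by_cases hv : v ∈ Y0
    · by_cases hva : v = a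
      · exact ⟨c0, Set.mem_union_left _ (Set.mem_union_right _ rfl), Or.inr (hva ▸ h1)⟩
      · by_cases hvb : v = b
        · exact ⟨c0, Set.mem_union_left _ (Set.mem_union_right _ rfl), Or.inr (hvb ▸ h2)⟩
        · exact ⟨v, Set.mem_union_right _ ⟨hv, by simp [hva, hvb]⟩, Or.inl rfl⟩
    · obtain ⟨x, hx, h⟩ := hNhX v hv
      exact ⟨x, Set.mem_union_left _ (Set.mem_union_left _ hx), h⟩
  have hb' : b ∈ Y0 \ {a} := ⟨hb, by simp [Ne.symm hab, (Ne.symm hab : b ≠ a)]⟩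
  have hcard : (Y0 \ {a, b}).ncard = Y0.ncard - 2 := by
    have h1' : (Y0 \ {a, b} : Set V) = (Y0 \ {a}) \ {b} := by
      ext v; simp [Set.mem_diff]; tauto
    rw [h1', Set.ncard_diff_singleton_of_mem hb',
      Set.ncard_diff_singleton_of_mem ha]
    omega
  have hs2 : 2 ≤ Y0.ncard := by
    have : ({a, b} : Set V).ncard ≤ Y0.ncard := by
      apply Set.ncard_le_ncard _ (Set.toFinite _)
      intro v hv
      rcases hv with rfl | rfl
      · exact ha
      · exact hb
    rwa [Set.ncard_pair hab] at this
  have hle : (X0 ∪ {c0} ∪ (Y0 \ {a, b})).ncard ≤ X0.ncard + 1 + (Y0.ncard - 2) := by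
    calc (X0 ∪ {c0} ∪ (Y0 \ {a, b})).ncard
        ≤ (X0 ∪ {c0}).ncard + (Y0 \ {a, b}).ncard := Set.ncard_union_le _ _
      _ ≤ (X0.ncard + ({c0} : Set V).ncard) + (Y0 \ {a, b}).ncard := by
          exact Nat.add_le_add_right (Set.ncard_union_le _ _) _
      _ = X0.ncard + 1 + (Y0.ncard - 2) := by rw [Set.ncard_singleton, hcard]
  have := card_ge_of_dom hγ hdom
  omega

/-- Trick 2: a C-vertex adjacent to two distinct B-vertices gives an (m-1) dominating set. -/
lemma trickAB (hγ : domNum G = m) (hABsum : A.ncard + B.ncard = m)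
    (hNhA : ∀ v, v ∉ B → v ∈ Nh G A)
    {c0 a b : V} (ha : a ∈ B) (hb : b ∈ B) (hab : a ≠ b)
    (hc0A : c0 ∉ A) (hc0B : c0 ∉ B)
    (h1 : G.Adj c0 a) (h2 : G.Adj c0 b) : False := by
  classical
  have hdom : IsDomSet G (A ∪ {c0} ∪ (B \ {a, b})) := by
    intro v _
    by_cases hv : v ∈ B
    · by_cases hva : v = a
      · exact ⟨c0, Set.mem_union_left _ (Set.mem_union_right _ rfl), Or.inr (hva ▸ h1)⟩
      · by_cases hvb : v = b
        · exact ⟨c0, Set.mem_union_left _ (Set.mem_union_right _ rfl), Or.inr (hvb ▸ h2)⟩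
        · exact ⟨v, Set.mem_union_right _ ⟨hv, by simp [hva, hvb]⟩, Or.inl rfl⟩
    · obtain ⟨x, hx, h⟩ := hNhA v hv
      exact ⟨x, Set.mem_union_left _ (Set.mem_union_left _ hx), h⟩
  have hb' : b ∈ B \ {a} := ⟨hb, by simp [(Ne.symm hab : b ≠ a)]⟩
  have hcard : (B \ {a, b}).ncard = B.ncard - 2 := by
    have h1' : (B \ {a, b} : Set V) = (B \ {a}) \ {b} := by
      ext v; simp [Set.mem_diff]; tauto
    rw [h1', Set.ncard_diff_singleton_of_mem hb',
      Set.ncard_diff_singleton_of_mem ha]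
    omega
  have hs2 : 2 ≤ B.ncard := by
    have : ({a, b} : Set V).ncard ≤ B.ncard := by
      apply Set.ncard_le_ncard _ (Set.toFinite _)
      intro v hv
      rcases hv with rfl | rfl
      · exact ha
      · exact hb
    rwa [Set.ncard_pair hab] at this
  have hle : (A ∪ {c0} ∪ (B \ {a, b})).ncard ≤ A.ncard + 1 + (B.ncard - 2) := by
    calc (A ∪ {c0} ∪ (B \ {a, b})).ncard
        ≤ (A ∪ {c0}).ncard + (B \ {a, b}).ncard := Set.ncard_union_le _ _
      _ ≤ (A.ncard + ({c0} : Set V).ncard) + (B \ {a, b}).ncard := by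
          exact Nat.add_le_add_right (Set.ncard_union_le _ _) _
      _ = A.ncard + 1 + (B.ncard - 2) := by rw [Set.ncard_singleton, hcard]
  have := card_ge_of_dom hγ hdom
  omega

/-- Trick 3: a vertex z (not in D, fixed by π) adjacent to π-images of two distinct A-vertices. -/
lemma trickH (hγ : domNum G = m) (hABdisj : Disjoint A B) (hABsum : A.ncard + B.ncard = m)
    (hNhB : ∀ v, v ∉ ⇑π '' A → v ∈ Nh G (⇑π '' B))
    {z a1 a2 : V} (ha1 : a1 ∈ A) (ha2 : a2 ∈ A) (h12 : a1 ≠ a2)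
    (hzA : z ∉ A) (hzB : z ∉ B) (hzfix : π z = z)
    (h1 : G.Adj z (π a1)) (h2 : G.Adj z (π a2)) : False := by
  classical
  have hzπD : z ∉ ⇑π '' A ∪ ⇑π '' B := by
    rintro (⟨v, hv, hzv⟩ | ⟨v, hv, hzv⟩)
    · exact hzA (by rw [π.injective (hzfix.trans hzv.symm)]; exact hv)
    · exact hzB (by rw [π.injective (hzfix.trans hzv.symm)]; exact hv)
  have hπBsub : ⇑π '' B ⊆ (⇑π '' A ∪ ⇑π '' B) \ {π a1, π a2} := by
    intro v hv
    refine ⟨Set.mem_union_right _ hv, ?_⟩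
    obtain ⟨b, hb, rfl⟩ := hv
    simp only [Set.mem_insert_iff, Set.mem_singleton_iff]
    rintro (h | h)
    · exact (hABdisj.ne_of_mem ha1 hb) (π.injective h).symm
    · exact (hABdisj.ne_of_mem ha2 hb) (π.injective h).symm
  have hdom : IsDomSet G (((⇑π '' A ∪ ⇑π '' B) \ {π a1, π a2}) ∪ {z}) := by
    intro v _
    by_cases hva : v = π a1
    · exact ⟨z, Set.mem_union_right _ rfl, Or.inr (hva ▸ h1)⟩
    · by_cases hvb : v = π a2
      · exact ⟨z, Set.mem_union_right _ rfl, Or.inr (hvb ▸ h2)⟩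
      · by_cases hv : v ∈ ⇑π '' A
        · exact ⟨v, Set.mem_union_left _ ⟨Set.mem_union_left _ hv, by simp [hva, hvb]⟩,
            Or.inl rfl⟩
        · obtain ⟨x, hx, h⟩ := hNhB v hv
          exact ⟨x, Set.mem_union_left _ (hπBsub hx), h⟩
  have hπDcard : (⇑π '' A ∪ ⇑π '' B).ncard = m := by
    rw [← Set.image_union, Set.ncard_image_of_injective _ π.injective]
    have hd : (A ∪ B).ncard = A.ncard + B.ncard :=
      Set.ncard_union_eq hABdisj (Set.toFinite _) (Set.toFinite _)
    rw [hd, hABsum]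
  have hm2 : 2 ≤ m := by
    have : ({a1, a2} : Set V).ncard ≤ A.ncard := by
      apply Set.ncard_le_ncard _ (Set.toFinite _)
      intro v hv
      rcases hv with rfl | rfl
      · exact ha1
      · exact ha2
    rw [Set.ncard_pair h12] at this
    omega
  have hπa2mem : π a2 ∈ (⇑π '' A ∪ ⇑π '' B) \ {π a1} := by
    refine ⟨Set.mem_union_left _ ⟨a2, ha2, rfl⟩, ?_⟩
    simp only [Set.mem_singleton_iff]
    intro h
    exact h12 (π.injective h).symm
  have hcard : ((⇑π '' A ∪ ⇑π '' B) \ {π a1, π a2}).ncard = m - 2 := by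
    have h1' : ((⇑π '' A ∪ ⇑π '' B) \ {π a1, π a2} : Set V)
        = ((⇑π '' A ∪ ⇑π '' B) \ {π a1}) \ {π a2} := by
      ext v; simp [Set.mem_diff]; tauto
    have hπa1mem : π a1 ∈ ⇑π '' A ∪ ⇑π '' B := Set.mem_union_left _ ⟨a1, ha1, rfl⟩
    rw [h1', Set.ncard_diff_singleton_of_mem hπa2mem,
      Set.ncard_diff_singleton_of_mem hπa1mem, hπDcard]
    omega
  have hle : (((⇑π '' A ∪ ⇑π '' B) \ {π a1, π a2}) ∪ {z}).ncard ≤ (m - 2) + 1 := by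
    calc (((⇑π '' A ∪ ⇑π '' B) \ {π a1, π a2}) ∪ {z}).ncard
        ≤ ((⇑π '' A ∪ ⇑π '' B) \ {π a1, π a2}).ncard + ({z} : Set V).ncard :=
          Set.ncard_union_le _ _
      _ = (m - 2) + 1 := by rw [hcard, Set.ncard_singleton]
  have := card_ge_of_dom hγ hdom
  omega

/-- Overlap lemma a : `m ≤ |A| + |X0| + |B ∩ Y0|`. -/
lemma overlapA (hγ : domNum G = m)
    (hNhX : ∀ v, v ∉ Y0 → v ∈ Nh G X0)
    (hNhA : ∀ v, v ∉ B → v ∈ Nh G A) :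
    m ≤ A.ncard + X0.ncard + (B ∩ Y0).ncard := by
  classical
  have hdom : IsDomSet G (A ∪ X0 ∪ (B ∩ Y0)) := by
    intro v _
    by_cases hv : v ∈ B
    · by_cases hvy : v ∈ Y0
      · exact ⟨v, Set.mem_union_right _ ⟨hv, hvy⟩, Or.inl rfl⟩
      · obtain ⟨x, hx, h⟩ := hNhX v hvy
        exact ⟨x, Set.mem_union_left _ (Set.mem_union_right _ hx), h⟩
    · obtain ⟨a, ha, h⟩ := hNhA v hv
      exact ⟨a, Set.mem_union_left _ (Set.mem_union_left _ ha), h⟩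
  calc m ≤ (A ∪ X0 ∪ (B ∩ Y0)).ncard := card_ge_of_dom hγ hdom
    _ ≤ (A ∪ X0).ncard + (B ∩ Y0).ncard := Set.ncard_union_le _ _
    _ ≤ A.ncard + X0.ncard + (B ∩ Y0).ncard :=
        Nat.add_le_add_right (Set.ncard_union_le _ _) _

/-- Overlap lemma b : `m ≤ |B| + |X0| + |πA ∩ Y0|`. -/
lemma overlapB (hγ : domNum G = m)
    (hNhX : ∀ v, v ∉ Y0 → v ∈ Nh G X0)
    (hNhB : ∀ v, v ∉ ⇑π '' A → v ∈ Nh G (⇑π '' B)) :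
    m ≤ B.ncard + X0.ncard + (⇑π '' A ∩ Y0).ncard := by
  classical
  have hdom : IsDomSet G (⇑π '' B ∪ X0 ∪ (⇑π '' A ∩ Y0)) := by
    intro v _
    by_cases hv : v ∈ ⇑π '' A
    · by_cases hvy : v ∈ Y0
      · exact ⟨v, Set.mem_union_right _ ⟨hv, hvy⟩, Or.inl rfl⟩
      · obtain ⟨x, hx, h⟩ := hNhX v hvy
        exact ⟨x, Set.mem_union_left _ (Set.mem_union_right _ hx), h⟩
    · obtain ⟨a, ha, h⟩ := hNhB v hv
      exact ⟨a, Set.mem_union_left _ (Set.mem_union_left _ ha), h⟩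
  have hB : (⇑π '' B).ncard = B.ncard := Set.ncard_image_of_injective _ π.injective
  calc m ≤ (⇑π '' B ∪ X0 ∪ (⇑π '' A ∩ Y0)).ncard := card_ge_of_dom hγ hdom
    _ ≤ (⇑π '' B ∪ X0).ncard + (⇑π '' A ∩ Y0).ncard := Set.ncard_union_le _ _
    _ ≤ (⇑π '' B).ncard + X0.ncard + (⇑π '' A ∩ Y0).ncard :=
        Nat.add_le_add_right (Set.ncard_union_le _ _) _
    _ = B.ncard + X0.ncard + (⇑π '' A ∩ Y0).ncard := by rw [hB]

end Main
end UFAux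


theorem stmt_15 [Fintype V] (G : SimpleGraph V) (hconn : G.Connected)
    (hn : 1 < Fintype.card V)
    (hpf : domNum (prism G (Equiv.refl V)) = domNum G)
    (m : ℕ) (hm : 4 ≤ m) (hγ : domNum G = m)
    (hno : ¬ ∃ D : Set V, IsEvenSymGammaSet G D) :
    ¬ IsUniversalFixer G := by
  intro hUF
  classical
  have hm1 : 1 ≤ m := by omega
  have hpf' : domNum (prism G (Equiv.refl V)) = m := by rw [hpf, hγ]
  obtain ⟨X0, Y0, hXY, hXYsum, hrs, hNhX, hNhY, hind⟩ :=
    UFAux.sym_pair hconn hn hm1 hγ hpf' hno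
  set s := Y0.ncard with hsdef
  have hs1 : 1 ≤ s := by omega
  have hY0ne : Y0.Nonempty := (Set.ncard_pos (Set.toFinite _)).1 (by omega)
  obtain ⟨w, hwX, hwY⟩ : ∃ w, w ∉ X0 ∧ w ∉ Y0 := by
    by_contra hco
    push_neg at hco
    obtain ⟨y0, hy0⟩ := hY0ne
    obtain ⟨u, hu⟩ := UFAux.exists_adj_of_connected hconn hn y0
    have h2 := hind y0 (Or.inr hy0) u hu
    exact h2.2 (hco u h2.1)
  obtain ⟨ystar, hystar, hyst⟩ : ∃ y ∈ Y0, G.Adj y w := by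
    obtain ⟨y, hy, h⟩ := hNhY w hwX
    rcases h with h | h
    · exact absurd (h ▸ hy) hwY
    · exact ⟨y, hy, h⟩
  obtain ⟨π, t, htπ, htmod, htY, ht0, htw, htinj, htsurj, htfix⟩ :=
    UFAux.cycle_perm Y0 ystar w hystar hwY
  have hpfπ : domNum (prism G π) = m := by rw [hUF π, hγ]
  obtain ⟨A, B, hAB, hABsum, hNhA, hNhB, hF1, hF2, hF3, hF4⟩ :=
    UFAux.extract π hm1 hγ hpfπ
  -- basic cycle facts
  have hts1 : t (s+1) = t 0 := by
    have h := htmod (s+1)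
    rw [Nat.mod_self] at h
    exact h.symm
  have hπw : π w = t 0 := by rw [← htw, htπ s, hts1]
  have hπpredw : π (t (s-1)) = w := by
    have he : s - 1 + 1 = s := by omega
    rw [htπ (s-1), he, htw]
  have hadj0w : G.Adj (t 0) w := by rw [ht0]; exact hyst
  have htiY : ∀ i, i ≤ s-1 → t i ∈ Y0 := fun i hi => htY i (by omega)
  have hindY : ∀ {x z : V}, x ∈ Y0 → z ∈ Y0 → G.Adj x z → False := by
    intro x z hx hz h
    exact (hind x (Or.inr hx) z h).2 hz
  have hcases : ∀ c : V, (∃ k, k ≤ s-1 ∧ c = t k) ∨ c = w ∨ (c ∉ Y0 ∧ c ≠ w) := by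
    intro c
    by_cases hc : c ∈ Y0
    · obtain ⟨k, hk, hkc⟩ := htsurj c hc
      exact Or.inl ⟨k, by omega, hkc.symm⟩
    · by_cases hcw : c = w
      · exact Or.inr (Or.inl hcw)
      · exact Or.inr (Or.inr ⟨hc, hcw⟩)
  -- forward C-chain
  have hchainC : t (s-1) ∉ B → (t 0 ∉ A ∧ t 0 ∉ B) →
      ∀ i, i ≤ s-1 → (t i ∉ A ∧ t i ∉ B) := by
    intro hsB h0 i
    induction i with
    | zero => exact fun _ => h0
    | succ n ih =>
      intro hn1
      have hC := ih (by omega)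
      obtain ⟨c, hc, hadj⟩ := hF3 (t n) hC.1 hC.2
      rw [htπ n] at hadj
      have htn1Y : t (n+1) ∈ Y0 := htiY _ hn1
      rcases hcases c with ⟨k, hk, rfl⟩ | rfl | ⟨hcY, hcw⟩
      · by_cases hks : k = s-1
        · exact absurd (hks ▸ hc) hsB
        · rw [htπ k] at hadj
          exact (hindY htn1Y (htiY (k+1) (by omega)) hadj).elim
      · rw [hπw] at hadj
        exact (hindY htn1Y (htiY 0 (by omega)) hadj).elim
      · rw [htfix c hcY hcw] at hadj
        exact hF2 c hc (t (n+1)) hadj.symm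
  -- predecessor step
  have hpredstep : t (s-1) ∉ B → ∀ i, i ≤ s-1 → (t i ∈ A ∨ t i ∈ B) →
      ∀ p, π (t p) = t i → (t p ∈ A ∨ t p ∈ B) := by
    intro hsB i hi hiD p hp
    by_contra hpC
    push_neg at hpC
    obtain ⟨c, hc, hadj⟩ := hF3 (t p) hpC.1 hpC.2
    rw [hp] at hadj
    have htiY' : t i ∈ Y0 := htiY i hi
    rcases hcases c with ⟨k, hk, rfl⟩ | rfl | ⟨hcY, hcw⟩
    · by_cases hks : k = s-1
      · exact hsB (hks ▸ hc)
      · rw [htπ k] at hadj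
        exact hindY htiY' (htiY (k+1) (by omega)) hadj
    · rw [hπw] at hadj
      exact hindY htiY' (htiY 0 (by omega)) hadj
    · rw [htfix c hcY hcw] at hadj
      rcases hiD with hA | hB
      · exact (hF2 c hc (t i) hadj.symm).1 hA
      · exact (hF2 (t i) hB c hadj).2 hc
  -- K8G
  have hK8G : w ∈ A → t (s-1) ∉ B → B ∩ Y0 = ∅ := by
    intro hwA hsB
    by_contra hBY
    obtain ⟨b0, hb0⟩ := Set.nonempty_iff_ne_empty.2 hBY
    obtain ⟨k0, hk0, hk0b⟩ := htsurj b0 hb0.2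
    have hIne : {i : ℕ | i ≤ s-1 ∧ t i ∈ B}.Nonempty :=
      ⟨k0, ⟨by omega, hk0b ▸ hb0.1⟩⟩
    set i0 := sInf {i : ℕ | i ≤ s-1 ∧ t i ∈ B} with hi0
    have hi0mem : i0 ∈ {i : ℕ | i ≤ s-1 ∧ t i ∈ B} := Nat.sInf_mem hIne
    have hi0le : i0 ≤ s-1 := hi0mem.1
    obtain ⟨c0, hc0adj⟩ := UFAux.exists_adj_of_connected hconn hn (t i0)
    have hti0Y : t i0 ∈ Y0 := htiY i0 hi0mem.1
    have hc0Y : c0 ∉ Y0 := (hind _ (Or.inr hti0Y) c0 hc0adj).2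
    have hc0D := hF2 (t i0) hi0mem.2 c0 hc0adj
    have hc0w : c0 ≠ w := fun h => hc0D.1 (h ▸ hwA)
    obtain ⟨c, hc, hadj⟩ := hF3 c0 hc0D.1 hc0D.2
    rw [htfix c0 hc0Y hc0w] at hadj
    rcases hcases c with ⟨k, hk, rfl⟩ | rfl | ⟨hcY, hcw⟩
    · by_cases hks : k = s-1
      · exact hsB (hks ▸ hc)
      · rw [htπ k] at hadj
        have hne : t i0 ≠ t (k+1) := by
          intro h
          have h1 := htinj i0 (k+1) (by omega) (by omega) h
          have h2 : i0 ≤ k := Nat.sInf_le ⟨by omega, hc⟩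
          omega
        exact UFAux.trickY hγ hXYsum hNhX hti0Y (htiY (k+1) (by omega)) hne
          hc0adj.symm hadj
    · exact (hAB.ne_of_mem hwA hc) rfl
    · rw [htfix c hcY hcw] at hadj
      have hne : t i0 ≠ c := fun h => hcY (h ▸ hti0Y)
      exact UFAux.trickAB hγ hABsum hNhA hi0mem.2 hc hne hc0D.1 hc0D.2 hc0adj.symm hadj
  -- K8G'
  have hK8G' : t (s-1) ∈ B → w ∉ A → A ∩ Y0 = ∅ := by
    intro hsB hwA
    by_contra hAY
    obtain ⟨a0, ha0⟩ := Set.nonempty_iff_ne_empty.2 hAY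
    obtain ⟨k0, hk0lt, hk0a⟩ := htsurj a0 ha0.2
    have hk0 : k0 ≤ s-2 := by
      by_contra h
      have he : k0 = s-1 := by omega
      have hA' : t (s-1) ∈ A := by rw [← he, hk0a]; exact ha0.1
      exact (hAB.ne_of_mem hA' hsB) rfl
    have hJne : {k : ℕ | k ≤ s-2 ∧ t (s-2-k) ∈ A}.Nonempty := by
      refine ⟨s-2-k0, ⟨by omega, ?_⟩⟩
      rw [show s-2-(s-2-k0) = k0 by omega, hk0a]
      exact ha0.1
    set i1 := s-2 - sInf {k : ℕ | k ≤ s-2 ∧ t (s-2-k) ∈ A} with hi1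
    have hJmem := Nat.sInf_mem hJne
    have hi1A : t i1 ∈ A := hJmem.2
    have hi1le : i1 ≤ s-2 := by omega
    have hi1max : ∀ j, j ≤ s-2 → t j ∈ A → j ≤ i1 := by
      intro j hj hjA
      by_contra hji
      push_neg at hji
      have hk : s-2-j < sInf {k : ℕ | k ≤ s-2 ∧ t (s-2-k) ∈ A} := by omega
      have hnot := Nat.notMem_of_lt_sInf hk
      exact hnot ⟨by omega, by rw [show s-2-(s-2-j) = j by omega]; exact hjA⟩
    obtain ⟨z0, hz0adj⟩ := UFAux.exists_adj_of_connected hconn hn (t (i1+1))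
    have hi11 : i1+1 ≤ s-1 := by omega
    have hti11Y : t (i1+1) ∈ Y0 := htiY _ hi11
    have hadj' : G.Adj (π (t i1)) (π (π.symm z0)) := by
      rw [Equiv.apply_symm_apply, htπ i1]
      exact hz0adj
    have hz0D := hF4 (t i1) hi1A (π.symm z0) hadj'
    by_cases hz0w : z0 = w
    · have hsymmw : π.symm w = t (s-1) := by
        rw [← hπpredw, Equiv.symm_apply_apply]
      rw [hz0w, hsymmw] at hz0D
      exact hz0D.2 hsB
    · have hz0Y : z0 ∉ Y0 := (hind _ (Or.inr hti11Y) z0 hz0adj).2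
      have hz0fix : π z0 = z0 := htfix z0 hz0Y hz0w
      have hsymm0 : π.symm z0 = z0 := π.injective (by rw [Equiv.apply_symm_apply, hz0fix])
      rw [hsymm0] at hz0D
      obtain ⟨u, hu, huadj⟩ := hF1 z0 hz0D.1 hz0D.2
      rcases hcases u with ⟨k, hk, rfl⟩ | rfl | ⟨huY, huw⟩
      · by_cases hks : k = s-1
        · exact (hAB.ne_of_mem (hks ▸ hu) hsB) rfl
        · have hklei : k ≤ i1 := hi1max k (by omega) hu
          have hne : t k ≠ t (i1+1) := by
            intro h
            have := htinj k (i1+1) (by omega) (by omega) h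
            omega
          exact UFAux.trickY hγ hXYsum hNhX (htiY k (by omega)) hti11Y hne
            huadj.symm hz0adj.symm
      · exact hwA hu
      · have hufix : π u = u := htfix u huY huw
        have hneu : u ≠ t i1 := fun h => huY (h ▸ htiY i1 (by omega))
        refine UFAux.trickH hγ hAB hABsum hNhB hu hi1A hneu hz0D.1 hz0D.2 hz0fix ?_ ?_
        · rw [hufix]; exact huadj.symm
        · rw [htπ i1]; exact hz0adj.symm
  -- OL contradiction
  have hOLcontra : B ∩ Y0 = ∅ → A ∩ Y0 = ∅ → w ∉ A → False := by
    intro hB0 hA0 hwA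
    have h1 := UFAux.overlapA (Y0 := Y0) (X0 := X0) (A := A) (B := B) hγ hNhX hNhA
    rw [hB0, Set.ncard_empty] at h1
    have hπAY : ⇑π '' A ∩ Y0 = ∅ := by
      ext z
      simp only [Set.mem_inter_iff, Set.mem_empty_iff_false, iff_false, not_and]
      rintro ⟨v, hv, rfl⟩ hzY
      by_cases hvY : v ∈ Y0
      · exact (Set.eq_empty_iff_forall_notMem.1 hA0 v) ⟨hv, hvY⟩
      · by_cases hvw : v = w
        · exact hwA (hvw ▸ hv)
        · rw [htfix v hvY hvw] at hzY
          exact hvY hzY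
    have h2 := UFAux.overlapB (Y0 := Y0) (X0 := X0) (A := A) (B := B) (π := π) hγ hNhX hNhB
    rw [hπAY, Set.ncard_empty] at h2
    omega
  -- MASTER CASES
  by_cases hwA : w ∈ A
  · have hP2 := hF4 w hwA (t (s-1)) (by rw [hπw, hπpredw]; exact hadj0w)
    have hBY := hK8G hwA hP2.2
    obtain ⟨c, hc, hadj⟩ := hF3 (t (s-1)) hP2.1 hP2.2
    rw [hπpredw] at hadj
    rcases hcases c with ⟨k, hk, rfl⟩ | rfl | ⟨hcY, hcw⟩
    · exact (Set.eq_empty_iff_forall_notMem.1 hBY (t k)) ⟨hc, htiY k hk⟩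
    · exact (hAB.ne_of_mem hwA hc) rfl
    · rw [htfix c hcY hcw] at hadj
      exact (hF2 c hc w hadj.symm).1 hwA
  · by_cases hwB : w ∈ B
    · have h0C := hF2 w hwB (t 0) hadj0w.symm
      by_cases hsB : t (s-1) ∈ B
      · have hAY := hK8G' hsB hwA
        have hIne : {i : ℕ | i ≤ s-1 ∧ t i ∈ B}.Nonempty := ⟨s-1, ⟨le_refl _, hsB⟩⟩
        set i0 := sInf {i : ℕ | i ≤ s-1 ∧ t i ∈ B} with hi0
        have hi0mem : i0 ∈ {i : ℕ | i ≤ s-1 ∧ t i ∈ B} := Nat.sInf_mem hIne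
        have hi0le : i0 ≤ s-1 := hi0mem.1
        have hi0pos : 1 ≤ i0 := by
          rcases Nat.eq_zero_or_pos i0 with h | h
          · exact absurd (h ▸ hi0mem.2) h0C.2
          · exact h
        have hi0pred : t (i0-1) ∉ B := by
          intro hb
          have := Nat.sInf_le (show i0-1 ∈ {i : ℕ | i ≤ s-1 ∧ t i ∈ B} from ⟨by omega, hb⟩)
          omega
        have hi0predA : t (i0-1) ∉ A := by
          intro ha
          exact (Set.eq_empty_iff_forall_notMem.1 hAY (t (i0-1)))
            ⟨ha, htiY _ (by omega)⟩
        obtain ⟨c, hc, hadj⟩ := hF3 (t (i0-1)) hi0predA hi0pred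
        rw [htπ (i0-1), show i0-1+1 = i0 by omega] at hadj
        have hti0Y := htiY i0 hi0mem.1
        rcases hcases c with ⟨k, hk, rfl⟩ | rfl | ⟨hcY, hcw⟩
        · by_cases hks : k = s-1
          · rw [hks, hπpredw] at hadj
            exact (hF2 (t i0) hi0mem.2 w hadj).2 hwB
          · rw [htπ k] at hadj
            exact hindY hti0Y (htiY (k+1) (by omega)) hadj
        · rw [hπw] at hadj
          exact hindY hti0Y (htiY 0 (by omega)) hadj
        · rw [htfix c hcY hcw] at hadj
          exact (hF2 (t i0) hi0mem.2 c hadj).2 hc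
      · have hall := hchainC hsB h0C
        have hBY : B ∩ Y0 = ∅ := by
          ext v
          simp only [Set.mem_inter_iff, Set.mem_empty_iff_false, iff_false, not_and]
          intro hvB hvY
          obtain ⟨k, hk, hkv⟩ := htsurj v hvY
          rw [← hkv] at hvB
          exact (hall k (by omega)).2 hvB
        have hAY : A ∩ Y0 = ∅ := by
          ext v
          simp only [Set.mem_inter_iff, Set.mem_empty_iff_false, iff_false, not_and]
          intro hvA hvY
          obtain ⟨k, hk, hkv⟩ := htsurj v hvY
          rw [← hkv] at hvA
          exact (hall k (by omega)).1 hvA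
        exact hOLcontra hBY hAY hwA
    · by_cases hsA : t (s-1) ∈ A
      · have hsB : t (s-1) ∉ B := fun h => (hAB.ne_of_mem hsA h) rfl
        have hdesc : ∀ k, k ≤ s-1 → (t (s-1-k) ∈ A ∨ t (s-1-k) ∈ B) := by
          intro k
          induction k with
          | zero =>
            intro _
            rw [Nat.sub_zero]
            exact Or.inl hsA
          | succ n ih =>
            intro hn1
            have hprev := ih (by omega)
            refine hpredstep hsB (s-1-n) (by omega) hprev (s-1-(n+1)) ?_
            rw [htπ (s-1-(n+1)), show s-1-(n+1)+1 = s-1-n by omega]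
        have h0D := hdesc (s-1) (le_refl _)
        rw [show s-1-(s-1) = 0 by omega] at h0D
        have hwD := hpredstep hsB 0 (by omega) h0D s (by rw [htπ s, hts1])
        rw [htw] at hwD
        rcases hwD with h | h
        · exact hwA h
        · exact hwB h
      · by_cases hsB : t (s-1) ∈ B
        · have hAY := hK8G' hsB hwA
          obtain ⟨u, hu, huadj⟩ := hF1 w hwA hwB
          rcases hcases u with ⟨k, hk, rfl⟩ | rfl | ⟨huY, huw⟩
          · exact (Set.eq_empty_iff_forall_notMem.1 hAY (t k)) ⟨hu, htiY k hk⟩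
          · exact hwA hu
          · have h := hF4 u hu (t (s-1))
              (by rw [htfix u huY huw, hπpredw]; exact huadj)
            exact h.2 hsB
        · obtain ⟨c, hc, hadj⟩ := hF3 w hwA hwB
          rw [hπw] at hadj
          have ht0Y : t 0 ∈ Y0 := htiY 0 (by omega)
          rcases hcases c with ⟨k, hk, rfl⟩ | rfl | ⟨hcY, hcw⟩
          · by_cases hks : k = s-1
            · exact hsB (hks ▸ hc)
            · rw [htπ k] at hadj
              exact hindY ht0Y (htiY (k+1) (by omega)) hadj
          · exact hwB hc
          · rw [htfix c hcY hcw] at hadj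
            have h0C := hF2 c hc (t 0) hadj.symm
            have hall := hchainC hsB h0C
            have hBY : B ∩ Y0 = ∅ := by
              ext v
              simp only [Set.mem_inter_iff, Set.mem_empty_iff_false, iff_false, not_and]
              intro hvB hvY
              obtain ⟨k, hk, hkv⟩ := htsurj v hvY
              rw [← hkv] at hvB
              exact (hall k (by omega)).2 hvB
            have hAY : A ∩ Y0 = ∅ := by
              ext v
              simp only [Set.mem_inter_iff, Set.mem_empty_iff_false, iff_false, not_and]
              intro hvA hvY
              obtain ⟨k, hk, hkv⟩ := htsurj v hvY
              rw [← hkv] at hvA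
              exact (hall k (by omega)).1 hvA
            exact hOLcontra hBY hAY hwA
end
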